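/- For any string S, the number of minimal absent words for S is at most σ² times the number of maximal repeats of S, where σ is the alphabet size. -/

import Mathlib

/-- Number of occurrences of `w` as a substring of `S` (for `w = ε` this is `|S| + 1`). -/
def occ {α : Type*} [DecidableEq α] (S w : List α) : ℕ :=
  (List.range (S.length + 1)).countP
    (fun i => decide (i + w.length ≤ S.length ∧ (S.drop i).take w.length = w))

/-- `u` is a maximal repeat of `S`. -/
def MaximalRepeat {α : Type*} [DecidableEq α] (S u : List α) : Prop :=
  2 ≤ occ S u ∧
  ((∃ c d : α, c ≠ d ∧ (c :: u) <:+: S ∧ (d :: u) <:+: S) ∨ u <+: S) ∧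
  ((∃ c d : α, c ≠ d ∧ (u ++ [c]) <:+: S ∧ (u ++ [d]) <:+: S) ∨ u <:+ S)

/-- The set of minimal absent words for `S`. -/
def MAWset {α : Type*} (S : List α) : Set (List α) :=
  {w | ∃ (a b : α) (u : List α), w = a :: (u ++ [b]) ∧
    ¬ (a :: (u ++ [b])) <:+: S ∧ (a :: u) <:+: S ∧ (u ++ [b]) <:+: S}

/-- `u` occurs in `S` at position `i`. -/
def Occ {α : Type*} (S u : List α) (i : ℕ) : Prop :=
  ∃ s t : List α, s ++ u ++ t = S ∧ s.length = i

lemma occ_pred_of_Occ {α : Type*} (S u : List α) (i : ℕ) (h : Occ S u i) :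
    i + u.length ≤ S.length ∧ (S.drop i).take u.length = u := by
  obtain ⟨s, t, hst, hi⟩ := h
  subst hi
  constructor
  · rw [← hst]; simp
  · rw [← hst, List.append_assoc, List.drop_left, List.take_left]

/-- Two distinct occurrence positions give `2 ≤ occ S u`. -/
lemma two_le_occ {α : Type*} [DecidableEq α] (S u : List α) (i j : ℕ)
    (hij : i ≠ j) (hi : Occ S u i) (hj : Occ S u j) : 2 ≤ occ S u := by
  have hi' := occ_pred_of_Occ S u i hi
  have hj' := occ_pred_of_Occ S u j hj
  unfold occ
  rw [List.countP_eq_length_filter]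
  set p : ℕ → Bool :=
    fun i => decide (i + u.length ≤ S.length ∧ (S.drop i).take u.length = u) with hp
  have hmem : ∀ k, (k + u.length ≤ S.length ∧ (S.drop k).take u.length = u) →
      k ∈ (List.range (S.length + 1)).filter p := by
    intro k hk
    rw [List.mem_filter]
    refine ⟨List.mem_range.mpr ?_, by simp [hp, hk.1, hk.2]⟩
    omega
  have hnd : ((List.range (S.length + 1)).filter p).Nodup :=
    List.nodup_range.filter _
  have hcard : ({i, j} : Finset ℕ).card ≤ ((List.range (S.length + 1)).filter p).toFinset.card := by
    apply Finset.card_le_card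
    intro x hx
    rw [List.mem_toFinset]
    rcases Finset.mem_insert.mp hx with h | h
    · subst h; exact hmem _ hi'
    · rw [Finset.mem_singleton] at h; subst h; exact hmem _ hj'
  rw [Finset.card_pair hij, List.toFinset_card_of_nodup hnd] at hcard
  exact hcard

lemma middle_maximal_repeat {α : Type*} [DecidableEq α] (S u : List α) (a b : α)
    (habs : ¬ (a :: (u ++ [b])) <:+: S) (hau : (a :: u) <:+: S) (hub : (u ++ [b]) <:+: S) :
    MaximalRepeat S u := by
  obtain ⟨s, t, hst⟩ := id hau
  obtain ⟨p, q, hpq⟩ := id hub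
  -- u occurs at s.length + 1 and at p.length
  have hOcc1 : Occ S u (s.length + 1) :=
    ⟨s ++ [a], t, by simpa using hst, by simp⟩
  have hOcc2 : Occ S u p.length :=
    ⟨p, [b] ++ q, by simpa using hpq, rfl⟩
  have hne : s.length + 1 ≠ p.length := by
    intro h
    apply habs
    -- then p = s ++ [a] and aub occurs
    have hp : p = s ++ [a] := by
      have h1 : S.take (s.length + 1) = s ++ [a] := by
        rw [← hst]
        have : s ++ (a :: u) ++ t = s ++ ([a] ++ (u ++ t)) := by simp
        rw [this]
        rw [show s.length + 1 = s.length + ([a] : List α).length by simp]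
        rw [List.take_length_add_append, List.take_left]
      have h2 : S.take p.length = p := by
        rw [← hpq, List.append_assoc, List.take_left]
      rw [← h, h1] at h2
      exact h2.symm
    refine ⟨s, q, ?_⟩
    rw [← hpq, hp]
    simp
  constructor
  · exact two_le_occ S u _ _ hne hOcc1 hOcc2
  constructor
  · -- left maximality
    rcases List.eq_nil_or_concat p with hpnil | ⟨p', c, hpc⟩
    · right
      subst hpnil
      exact ⟨[b] ++ q, by simpa using hpq⟩
    · left
      refine ⟨c, a, ?_, ⟨p', [b] ++ q, ?_⟩, hau⟩
      · intro h
        subst h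
        apply habs
        refine ⟨p', q, ?_⟩
        rw [← hpq, hpc]
        simp
      · rw [← hpq, hpc]; simp
  · -- right maximality
    rcases t with _ | ⟨d, t'⟩
    · right
      refine ⟨s ++ [a], ?_⟩
      rw [← hst]; simp
    · left
      refine ⟨d, b, ?_, ⟨s ++ [a], t', ?_⟩, hub⟩
      · intro h
        subst h
        apply habs
        refine ⟨s, t', ?_⟩
        rw [← hst]
        simp
      · rw [← hst]; simp

lemma length_le_of_maximal_repeat {α : Type*} [DecidableEq α] {S u : List α}
    (h : MaximalRepeat S u) : u.length ≤ S.length := by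
  have h2 := h.1
  unfold occ at h2
  set p : ℕ → Bool :=
    fun i => decide (i + u.length ≤ S.length ∧ (S.drop i).take u.length = u) with hp
  rw [List.countP_eq_length_filter] at h2
  have hne : ((List.range (S.length + 1)).filter p) ≠ [] := by
    intro hnil
    rw [hnil] at h2
    simp at h2
  obtain ⟨i, hi⟩ := List.exists_mem_of_ne_nil _ hne
  rw [List.mem_filter] at hi
  have := of_decide_eq_true hi.2
  omega

theorem maw_count_le {α : Type*} [Fintype α] [DecidableEq α] (S : List α) :
    (MAWset S).ncard ≤ Fintype.card α ^ 2 * {u : List α | MaximalRepeat S u}.ncard := by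
  classical
  set R : Set (List α) := {u : List α | MaximalRepeat S u} with hR
  have hRfin : R.Finite := by
    apply (List.finite_length_le α S.length).subset
    intro u hu
    exact length_le_of_maximal_repeat hu
  set f : (α × α) × List α → List α := fun p => p.1.1 :: (p.2 ++ [p.1.2]) with hf
  have hsub : MAWset S ⊆ f '' ((Set.univ : Set (α × α)) ×ˢ R) := by
    rintro w ⟨a, b, u, hw, habs, hau, hub⟩
    exact ⟨((a, b), u), ⟨Set.mem_univ _, middle_maximal_repeat S u a b habs hau hub⟩, hw.symm⟩
  have hprodfin : ((Set.univ : Set (α × α)) ×ˢ R).Finite := Set.finite_univ.prod hRfin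
  calc (MAWset S).ncard ≤ (f '' ((Set.univ : Set (α × α)) ×ˢ R)).ncard :=
        Set.ncard_le_ncard hsub (hprodfin.image f)
    _ ≤ ((Set.univ : Set (α × α)) ×ˢ R).ncard := Set.ncard_image_le hprodfin
    _ = Fintype.card α ^ 2 * R.ncard := by
        rw [← Nat.card_coe_set_eq, Nat.card_congr (Equiv.Set.prod _ _),
          Nat.card_prod, Nat.card_coe_set_eq, Nat.card_coe_set_eq,
          Set.ncard_univ, Nat.card_eq_fintype_card, Fintype.card_prod, sq]
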